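/- Under the assumptions of the local existence theorem (u nonnegative with u(t) ≤ C t^{β-1} on (0,T], F locally bounded and locally Lipschitz in the second variable), the unique local solution f of f(t) = f₀ + ∫₀ᵗ u(t−s) F(s, f(s)) ds is Hölder continuous of order β: there exists L > 0 such that |f(t) − f(s)| ≤ L |t − s|^β for all t, s in the existence interval. -/

import Mathlib

open Set MeasureTheory

/-- Hölder regularity of order β of the local solution of the Volterra
integral equation. -/
theorem stmt5 (X : Type*) [NormedAddCommGroup X] [NormedSpace ℝ X] [CompleteSpace X]
    (u : ℝ → ℝ) (C β T' : ℝ) (hβ : β ∈ Set.Ioo (0:ℝ) 1) (hC : 0 < C) (hT' : 0 < T')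
    (hu : ∀ t ∈ Set.Ioc (0:ℝ) T', 0 ≤ u t ∧ u t ≤ C * t ^ (β - 1))
    (hmono : AntitoneOn u (Set.Ioc (0:ℝ) T'))
    (f₀ : X) (R : ℝ) (hR : 0 < R) (F : ℝ → X → X)
    (CR : ℝ) (hCR : 0 < CR)
    (hFb : ∀ t ∈ Set.Icc (0:ℝ) T', ∀ x : X, ‖x - f₀‖ ≤ R → ‖F t x‖ ≤ CR)
    (LR : ℝ) (hLR : 0 < LR)
    (hFl : ∀ t ∈ Set.Icc (0:ℝ) T',
      ∀ x z : X, ‖x - f₀‖ ≤ R → ‖z - f₀‖ ≤ R → ‖F t x - F t z‖ ≤ LR * ‖x - z‖)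
    (f : ℝ → X) (hf : ContinuousOn f (Set.Icc 0 T'))
    (hfball : ∀ t ∈ Set.Icc (0:ℝ) T', ‖f t - f₀‖ ≤ R)
    (hfeq : ∀ t ∈ Set.Icc (0:ℝ) T', f t = f₀ + ∫ s in (0:ℝ)..t, u (t - s) • F s (f s)) :
    ∃ L > (0:ℝ), ∀ t ∈ Set.Icc (0:ℝ) T', ∀ s ∈ Set.Icc (0:ℝ) T',
      ‖f t - f s‖ ≤ L * |t - s| ^ β := by
  obtain ⟨hβ0, hβ1⟩ := hβ
  have hβ1' : -1 < β - 1 := by linarith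
  have hβne : β - 1 ≠ 0 := by intro h; rw [sub_eq_zero] at h; exact absurd h (by linarith)
  set g : ℝ → X := fun σ => F σ (f σ) with hgdef
  have hgb : ∀ σ ∈ Icc (0:ℝ) T', ‖g σ‖ ≤ CR := fun σ hσ => hFb σ hσ _ (hfball σ hσ)
  set w : ℝ → ℝ := fun x => if x ∈ Ioc (0:ℝ) T' then u x else 0 with hwdef
  have hw_eq : ∀ x ∈ Ioc (0:ℝ) T', w x = u x := fun x hx => if_pos hx
  have hw0 : ∀ x, 0 ≤ w x := by
    intro x; by_cases hx : x ∈ Ioc (0:ℝ) T'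
    · rw [hw_eq x hx]; exact (hu x hx).1
    · simp only [hwdef, if_neg hx]; exact le_refl 0
  have hw_le : ∀ x ∈ Icc (0:ℝ) T', w x ≤ C * x ^ (β - 1) := by
    intro x hx
    rcases eq_or_lt_of_le hx.1 with h0 | h0
    · rw [← h0, Real.zero_rpow hβne, mul_zero]
      have : (0:ℝ) ∉ Ioc (0:ℝ) T' := by simp
      simp only [hwdef, if_neg this]; exact le_refl 0
    · rw [hw_eq x ⟨h0, hx.2⟩]; exact (hu x ⟨h0, hx.2⟩).2
  -- measurability of w
  have hwmeas : Measurable w := by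
    apply measurable_of_Iio
    intro r
    have h1 : MeasurableSet {x | x ∈ Ioc (0:ℝ) T' ∧ u x < r} := by
      have hoc : OrdConnected {x | x ∈ Ioc (0:ℝ) T' ∧ u x < r} := by
        constructor
        intro x hx y hy z hz
        have hzI : z ∈ Ioc (0:ℝ) T' := ⟨lt_of_lt_of_le hx.1.1 hz.1, le_trans hz.2 hy.1.2⟩
        exact ⟨hzI, lt_of_le_of_lt (hmono hx.1 hzI hz.1) hx.2⟩
      exact hoc.measurableSet
    have hset : w ⁻¹' Iio r =
        {x | x ∈ Ioc (0:ℝ) T' ∧ u x < r} ∪ (if (0:ℝ) < r then (Ioc (0:ℝ) T')ᶜ else ∅) := by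
      ext x
      simp only [mem_preimage, mem_Iio, mem_union, mem_setOf_eq]
      constructor
      · intro h'
        by_cases hx : x ∈ Ioc (0:ℝ) T'
        · exact Or.inl ⟨hx, by rwa [hw_eq x hx] at h'⟩
        · right
          have hwx : w x = 0 := by simp only [hwdef, if_neg hx]
          have h0 : (0:ℝ) < r := by rwa [hwx] at h'
          rw [if_pos h0]; exact hx
      · intro h
        rcases h with ⟨hx, hur⟩ | h
        · rwa [hw_eq x hx]
        · by_cases h0 : (0:ℝ) < r
          · rw [if_pos h0] at h
            have hwx : w x = 0 := by simp only [hwdef, if_neg h]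
            rw [hwx]; exact h0
          · rw [if_neg h0] at h; exact absurd h (notMem_empty x)
    rw [hset]
    apply h1.union
    split_ifs
    · exact measurableSet_Ioc.compl
    · exact MeasurableSet.empty
  -- integrability of rpow comparison functions
  have hrpow_int : ∀ a b : ℝ, IntervalIntegrable (fun x : ℝ => x ^ (β - 1)) volume a b :=
    fun a b => intervalIntegral.intervalIntegrable_rpow' hβ1'
  have hrpow_int' : ∀ a b c : ℝ, IntervalIntegrable (fun σ : ℝ => (c - σ) ^ (β - 1)) volume a b := by
    intro a b c
    have := ((hrpow_int (c - b) (c - a)).comp_sub_left c).symm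
    simpa using this
  have hrpow_val0 : ∀ b : ℝ, (∫ σ in (0:ℝ)..b, σ ^ (β - 1)) = b ^ β / β := by
    intro b
    rw [integral_rpow (Or.inl hβ1'), show β - 1 + 1 = β from by ring,
      Real.zero_rpow hβ0.ne', sub_zero]
  have hrpow_val : ∀ a b : ℝ, (∫ σ in a..b, (b - σ) ^ (β - 1)) = (b - a) ^ β / β := by
    intro a b
    rw [intervalIntegral.integral_comp_sub_left (fun x : ℝ => x ^ (β - 1)) b, sub_self]
    exact hrpow_val0 (b - a)
  -- integrability of w
  have hw_int : ∀ b ∈ Icc (0:ℝ) T', IntervalIntegrable w volume 0 b := by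
    intro b hb
    refine ((hrpow_int 0 b).const_mul C).mono_fun' hwmeas.aestronglyMeasurable.restrict ?_
    filter_upwards [ae_restrict_mem measurableSet_uIoc] with x hx
    rw [Set.uIoc_of_le hb.1] at hx
    rw [Real.norm_eq_abs, abs_of_nonneg (hw0 x)]
    exact hw_le x ⟨hx.1.le, hx.2.trans hb.2⟩
  have hw_val : ∀ b ∈ Icc (0:ℝ) T', (∫ σ in (0:ℝ)..b, w σ) ≤ C * b ^ β / β := by
    intro b hb
    calc (∫ σ in (0:ℝ)..b, w σ) ≤ ∫ σ in (0:ℝ)..b, C * σ ^ (β - 1) := by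
          apply intervalIntegral.integral_mono_on hb.1 (hw_int b hb) ((hrpow_int 0 b).const_mul C)
          intro x hx; exact hw_le x ⟨hx.1, hx.2.trans hb.2⟩
      _ = C * b ^ β / β := by
          rw [intervalIntegral.integral_const_mul, hrpow_val0 b, mul_div_assoc]
  -- the basic setup for the integral equation
  set L : ℝ := 2 * (C * CR / β) with hLdef
  have hL : 0 < L := by positivity
  set P : ℝ → Prop := fun t => IntervalIntegrable (fun σ => u (t - σ) • g σ) volume 0 t with hPdef
  have hfzero : ∀ x ∈ Icc (0:ℝ) T', ¬ P x → f x = f₀ := by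
    intro x hx hPx
    rw [hfeq x hx, intervalIntegral.integral_undef hPx, add_zero]
  have haeeq : ∀ t ∈ Icc (0:ℝ) T',
      (fun σ => u (t - σ) • g σ) =ᵐ[volume.restrict (Set.uIoc 0 t)]
      (fun σ => w (t - σ) • g σ) := by
    intro t ht
    rw [Set.uIoc_of_le ht.1]
    have h2 : ∀ᵐ σ ∂volume.restrict (Ioc 0 t), σ ≠ t := by
      refine ae_restrict_of_ae ?_
      rw [ae_iff]
      simp only [not_not, setOf_eq_eq_singleton]
      exact measure_singleton t
    filter_upwards [ae_restrict_mem measurableSet_Ioc, h2] with σ h1 h2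
    have : t - σ ∈ Ioc 0 T' := ⟨sub_pos.mpr (lt_of_le_of_ne h1.2 h2), by
      have := h1.1; have := ht.2; linarith⟩
    rw [hw_eq _ this]
  have hPw : ∀ t ∈ Icc (0:ℝ) T', P t →
      IntervalIntegrable (fun σ => w (t - σ) • g σ) volume 0 t := by
    intro t ht hPt
    rw [hPdef] at hPt
    rw [intervalIntegrable_iff] at hPt ⊢
    exact hPt.congr (haeeq t ht)
  have hIeq : ∀ t ∈ Icc (0:ℝ) T',
      (∫ σ in (0:ℝ)..t, u (t - σ) • g σ) = ∫ σ in (0:ℝ)..t, w (t - σ) • g σ := by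
    intro t ht
    exact intervalIntegral.integral_congr_ae ((ae_restrict_iff' measurableSet_uIoc).mp (haeeq t ht))
  -- the key Hölder estimate assuming integrability at both times
  have hkey : ∀ s t : ℝ, s ∈ Icc (0:ℝ) T' → t ∈ Icc (0:ℝ) T' → s ≤ t → P s → P t →
      ‖f t - f s‖ ≤ L * (t - s) ^ β := by
    intro s t hs ht hst Ps Pt
    rcases eq_or_lt_of_le hst with rfl | hlt
    · simp [Real.zero_rpow hβ0.ne']
    have ht0 : 0 < t := lt_of_le_of_lt hs.1 hlt
    have hPwt := hPw t ht Pt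
    have hPws := hPw s hs Ps
    have hsub1 : Set.uIcc (0:ℝ) s ⊆ Set.uIcc 0 t := by
      rw [Set.uIcc_of_le hs.1, Set.uIcc_of_le ht.1]
      exact Set.Icc_subset_Icc le_rfl hst
    have hsub2 : Set.uIcc s t ⊆ Set.uIcc 0 t := by
      rw [Set.uIcc_of_le hst, Set.uIcc_of_le ht.1]
      exact Set.Icc_subset_Icc hs.1 le_rfl
    have hsub3 : Set.uIcc (t - s) t ⊆ Set.uIcc 0 t := by
      rw [Set.uIcc_of_le (by linarith [hs.1] : t - s ≤ t), Set.uIcc_of_le ht.1]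
      exact Set.Icc_subset_Icc (by linarith [hs.1]) le_rfl
    have hsub4 : Set.uIcc (0:ℝ) (t - s) ⊆ Set.uIcc 0 t := by
      rw [Set.uIcc_of_le (by linarith : (0:ℝ) ≤ t - s), Set.uIcc_of_le ht.1]
      exact Set.Icc_subset_Icc le_rfl (by linarith [hs.1])
    -- decompose f t - f s
    have hft : f t - f s = (∫ σ in (0:ℝ)..s, (w (t - σ) - w (s - σ)) • g σ)
        + ∫ σ in s..t, w (t - σ) • g σ := by
      have e1 : f t = f₀ + ∫ σ in (0:ℝ)..t, w (t - σ) • g σ := by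
        rw [hfeq t ht]; congr 1; exact hIeq t ht
      have e2 : f s = f₀ + ∫ σ in (0:ℝ)..s, w (s - σ) • g σ := by
        rw [hfeq s hs]; congr 1; exact hIeq s hs
      have e3 : (∫ σ in (0:ℝ)..t, w (t - σ) • g σ)
          = (∫ σ in (0:ℝ)..s, w (t - σ) • g σ) + ∫ σ in s..t, w (t - σ) • g σ :=
        (intervalIntegral.integral_add_adjacent_intervals
          (hPwt.mono_set hsub1) (hPwt.mono_set hsub2)).symm
      have e4 : (∫ σ in (0:ℝ)..s, w (t - σ) • g σ) - (∫ σ in (0:ℝ)..s, w (s - σ) • g σ)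
          = ∫ σ in (0:ℝ)..s, (w (t - σ) - w (s - σ)) • g σ := by
        rw [← intervalIntegral.integral_sub (hPwt.mono_set hsub1) hPws]
        apply intervalIntegral.integral_congr
        intro σ _; simp [sub_smul]
      rw [e1, e2, add_sub_add_left_eq_sub, e3, ← e4]; abel
    -- bound the second term
    have hb2 : ‖∫ σ in s..t, w (t - σ) • g σ‖ ≤ C * CR / β * (t - s) ^ β := by
      have hint : IntervalIntegrable (fun σ => C * CR * (t - σ) ^ (β - 1)) volume s t :=
        (hrpow_int' s t t).const_mul (C * CR)
      have hae : ∀ᵐ σ ∂volume.restrict (Set.uIoc s t),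
          ‖w (t - σ) • g σ‖ ≤ C * CR * (t - σ) ^ (β - 1) := by
        filter_upwards [ae_restrict_mem measurableSet_uIoc] with σ hσ
        rw [Set.uIoc_of_le hst] at hσ
        have h1 : t - σ ∈ Icc (0:ℝ) T' := ⟨by linarith [hσ.2], by
          have := hσ.1; have := hs.1; have := ht.2; linarith⟩
        have h2 : σ ∈ Icc (0:ℝ) T' := ⟨hs.1.trans hσ.1.le, hσ.2.trans ht.2⟩
        rw [norm_smul, Real.norm_eq_abs, abs_of_nonneg (hw0 _)]
        calc w (t - σ) * ‖g σ‖ ≤ (C * (t - σ) ^ (β - 1)) * CR :=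
              mul_le_mul (hw_le _ h1) (hgb σ h2) (norm_nonneg _)
                (mul_nonneg hC.le (Real.rpow_nonneg h1.1 _))
          _ = C * CR * (t - σ) ^ (β - 1) := by ring
      have hle := intervalIntegral.norm_integral_le_abs_of_norm_le hae hint
      rw [intervalIntegral.integral_const_mul, hrpow_val s t] at hle
      calc ‖∫ σ in s..t, w (t - σ) • g σ‖ ≤ |C * CR * ((t - s) ^ β / β)| := hle
        _ = C * CR / β * (t - s) ^ β := by
            rw [abs_of_nonneg (mul_nonneg (by positivity)
              (div_nonneg (Real.rpow_nonneg (by linarith) β) hβ0.le))]; ring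
    -- bound the first term
    have hb1 : ‖∫ σ in (0:ℝ)..s, (w (t - σ) - w (s - σ)) • g σ‖
        ≤ C * CR / β * (t - s) ^ β := by
      have hws : IntervalIntegrable (fun σ => w (s - σ)) volume 0 s := by
        have := ((hw_int s hs).comp_sub_left s).symm
        simpa using this
      have hwt : IntervalIntegrable (fun σ => w (t - σ)) volume 0 s := by
        have h0 := (hw_int t ht).mono_set hsub3
        have := (h0.comp_sub_left t).symm
        simpa using this
      have hbound : IntervalIntegrable (fun σ => CR * (w (s - σ) - w (t - σ))) volume 0 s :=
        (hws.sub hwt).const_mul CR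
      have hnes : ∀ᵐ σ ∂volume.restrict (Set.uIoc 0 s), σ ≠ s := by
        refine ae_restrict_of_ae ?_
        rw [ae_iff]
        simp only [not_not, setOf_eq_eq_singleton]
        exact measure_singleton s
      have haeb : ∀ᵐ σ ∂volume.restrict (Set.uIoc 0 s),
          ‖(w (t - σ) - w (s - σ)) • g σ‖ ≤ CR * (w (s - σ) - w (t - σ)) := by
        filter_upwards [ae_restrict_mem measurableSet_uIoc, hnes] with σ hσ hne
        rw [Set.uIoc_of_le hs.1] at hσ
        have hσs : σ < s := lt_of_le_of_ne hσ.2 hne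
        have hsσ : s - σ ∈ Ioc (0:ℝ) T' := ⟨by linarith, by
          have := hσ.1; have := hs.2; linarith⟩
        have htσ : t - σ ∈ Ioc (0:ℝ) T' := ⟨by linarith, by
          have := hσ.1; have := ht.2; linarith⟩
        have hwle : w (t - σ) ≤ w (s - σ) := by
          rw [hw_eq _ hsσ, hw_eq _ htσ]
          exact hmono hsσ htσ (by linarith)
        have h2 : σ ∈ Icc (0:ℝ) T' := ⟨hσ.1.le, hσ.2.trans hs.2⟩
        rw [norm_smul, Real.norm_eq_abs, abs_of_nonpos (by linarith), neg_sub]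
        calc (w (s - σ) - w (t - σ)) * ‖g σ‖ ≤ (w (s - σ) - w (t - σ)) * CR :=
              mul_le_mul_of_nonneg_left (hgb σ h2) (by linarith)
          _ = CR * (w (s - σ) - w (t - σ)) := by ring
      have hle := intervalIntegral.norm_integral_le_abs_of_norm_le haeb hbound
      have hintnn : 0 ≤ ∫ σ in (0:ℝ)..s, CR * (w (s - σ) - w (t - σ)) := by
        apply intervalIntegral.integral_nonneg_of_ae_restrict hs.1
        have hnes' : ∀ᵐ σ ∂volume.restrict (Icc (0:ℝ) s), σ ≠ s := by
          refine ae_restrict_of_ae ?_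
          rw [ae_iff]
          simp only [not_not, setOf_eq_eq_singleton]
          exact measure_singleton s
        filter_upwards [ae_restrict_mem measurableSet_Icc, hnes'] with σ hσ hne
        have hσs : σ < s := lt_of_le_of_ne hσ.2 hne
        have hsσ : s - σ ∈ Ioc (0:ℝ) T' := ⟨by linarith, by linarith [hσ.1, hs.2]⟩
        have htσ : t - σ ∈ Ioc (0:ℝ) T' := ⟨by linarith, by linarith [hσ.1, ht.2]⟩
        have hwle : w (t - σ) ≤ w (s - σ) := by
          rw [hw_eq _ hsσ, hw_eq _ htσ]
          exact hmono hsσ htσ (by linarith)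
        exact mul_nonneg hCR.le (by linarith)
      have hval : (∫ σ in (0:ℝ)..s, CR * (w (s - σ) - w (t - σ)))
          ≤ CR * (C * (t - s) ^ β / β) := by
        rw [intervalIntegral.integral_const_mul, intervalIntegral.integral_sub hws hwt]
        have c1 : (∫ σ in (0:ℝ)..s, w (s - σ)) = ∫ σ in (0:ℝ)..s, w σ := by
          rw [intervalIntegral.integral_comp_sub_left w s, sub_self, sub_zero]
        have c2 : (∫ σ in (0:ℝ)..s, w (t - σ)) = ∫ σ in (t - s)..t, w σ := by
          rw [intervalIntegral.integral_comp_sub_left w t, sub_zero]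
        rw [c1, c2]
        have c3 : (∫ σ in (0:ℝ)..s, w σ) ≤ ∫ σ in (0:ℝ)..t, w σ := by
          rw [← intervalIntegral.integral_add_adjacent_intervals
            ((hw_int t ht).mono_set hsub1) ((hw_int t ht).mono_set hsub2)]
          have : 0 ≤ ∫ σ in s..t, w σ :=
            intervalIntegral.integral_nonneg hst (fun x _ => hw0 x)
          linarith
        have c4 : (∫ σ in (0:ℝ)..t, w σ) = (∫ σ in (0:ℝ)..(t - s), w σ) + ∫ σ in (t - s)..t, w σ :=
          (intervalIntegral.integral_add_adjacent_intervals
            ((hw_int t ht).mono_set hsub4) ((hw_int t ht).mono_set hsub3)).symm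
        have c5 : (∫ σ in (0:ℝ)..(t - s), w σ) ≤ C * (t - s) ^ β / β :=
          hw_val (t - s) ⟨by linarith, by linarith [hs.1, ht.2]⟩
        have : (∫ σ in (0:ℝ)..s, w σ) - (∫ σ in (t - s)..t, w σ) ≤ C * (t - s) ^ β / β := by
          linarith
        nlinarith [hCR.le]
      calc ‖∫ σ in (0:ℝ)..s, (w (t - σ) - w (s - σ)) • g σ‖
          ≤ |∫ σ in (0:ℝ)..s, CR * (w (s - σ) - w (t - σ))| := hle
        _ = ∫ σ in (0:ℝ)..s, CR * (w (s - σ) - w (t - σ)) := abs_of_nonneg hintnn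
        _ ≤ CR * (C * (t - s) ^ β / β) := hval
        _ = C * CR / β * (t - s) ^ β := by ring
    calc ‖f t - f s‖ = ‖(∫ σ in (0:ℝ)..s, (w (t - σ) - w (s - σ)) • g σ)
          + ∫ σ in s..t, w (t - σ) • g σ‖ := by rw [hft]
      _ ≤ ‖∫ σ in (0:ℝ)..s, (w (t - σ) - w (s - σ)) • g σ‖
          + ‖∫ σ in s..t, w (t - σ) • g σ‖ := norm_add_le _ _
      _ ≤ C * CR / β * (t - s) ^ β + C * CR / β * (t - s) ^ β := add_le_add hb1 hb2
      _ = L * (t - s) ^ β := by rw [hLdef]; ring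
  -- mixed case: P a, ¬ P b
  have hmix : ∀ a ∈ Icc (0:ℝ) T', ∀ b ∈ Icc (0:ℝ) T', P a → ¬ P b →
      ‖f a - f b‖ ≤ L * |a - b| ^ β := by
    intro a ha b hb Pa Pb
    have hfb : f b = f₀ := hfzero b hb Pb
    have hZ : IsClosed {x | x ∈ Icc (0:ℝ) T' ∧ f x = f₀} := by
      have h : {x | x ∈ Icc (0:ℝ) T' ∧ f x = f₀} = Icc (0:ℝ) T' ∩ f ⁻¹' {f₀} := by
        ext x
        simp [Set.mem_inter_iff, Set.mem_preimage]
      rw [h]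
      exact hf.preimage_isClosed_of_isClosed isClosed_Icc (isClosed_singleton (x := f₀))
    rcases le_total b a with hba | hab
    · rw [abs_of_nonneg (by linarith)]
      set S : Set ℝ := {x | x ∈ Icc b a ∧ ¬ P x} with hSdef
      have hbS : b ∈ S := ⟨⟨le_rfl, hba⟩, Pb⟩
      have hSne : S.Nonempty := ⟨b, hbS⟩
      have hSbdd : BddAbove S := ⟨a, fun x hx => hx.1.2⟩
      set c := sSup S with hcdef
      have hcba : b ≤ c := le_csSup hSbdd hbS
      have hcab : c ≤ a := csSup_le hSne (fun x hx => hx.1.2)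
      have hcI : c ∈ Icc (0:ℝ) T' := ⟨hb.1.trans hcba, hcab.trans ha.2⟩
      have hfc : f c = f₀ := by
        have hsubZ : S ⊆ {x | x ∈ Icc (0:ℝ) T' ∧ f x = f₀} := by
          intro x hx
          have hxI : x ∈ Icc (0:ℝ) T' := ⟨hb.1.trans hx.1.1, hx.1.2.trans ha.2⟩
          exact ⟨hxI, hfzero x hxI hx.2⟩
        exact ((closure_minimal hsubZ hZ) (csSup_mem_closure hSne hSbdd)).2
      have hPIoc : ∀ τ ∈ Ioc c a, P τ := by
        intro τ hτ
        by_contra hPτ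
        exact absurd (le_csSup hSbdd ⟨⟨hcba.trans hτ.1.le, hτ.2⟩, hPτ⟩)
          (not_le.mpr hτ.1)
      rcases eq_or_lt_of_le hcab with heq | hca
      · rw [hfb, show f a = f₀ from heq ▸ hfc, sub_self, norm_zero]
        exact mul_nonneg hL.le (Real.rpow_nonneg (by linarith) β)
      · have hkey' : ∀ τ ∈ Ioc c a, ‖f a - f τ‖ ≤ L * (a - c) ^ β := by
          intro τ hτ
          have hτI : τ ∈ Icc (0:ℝ) T' := ⟨hcI.1.trans hτ.1.le, hτ.2.trans ha.2⟩
          calc ‖f a - f τ‖ ≤ L * (a - τ) ^ β := hkey τ a hτI ha hτ.2 (hPIoc τ hτ) Pa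
            _ ≤ L * (a - c) ^ β := mul_le_mul_of_nonneg_left
                (Real.rpow_le_rpow (by linarith [hτ.2]) (by linarith [hτ.1]) hβ0.le) hL.le
        have hne : (nhdsWithin c (Ioc c a)).NeBot := by
          apply mem_closure_iff_nhdsWithin_neBot.mp
          rw [closure_Ioc hca.ne]
          exact ⟨le_rfl, hca.le⟩
        have h1 : Filter.Tendsto f (nhdsWithin c (Ioc c a)) (nhds (f c)) :=
          (hf c hcI).mono_left (nhdsWithin_mono c
            (fun x hx => ⟨hcI.1.trans hx.1.le, hx.2.trans ha.2⟩))
        have htend : Filter.Tendsto (fun τ => ‖f a - f τ‖) (nhdsWithin c (Ioc c a))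
            (nhds ‖f a - f c‖) := (Filter.Tendsto.sub tendsto_const_nhds h1).norm
        have hlim : ‖f a - f c‖ ≤ L * (a - c) ^ β := by
          apply le_of_tendsto htend
          filter_upwards [self_mem_nhdsWithin] with τ hτ
          exact hkey' τ hτ
        rw [hfb, ← hfc]
        calc ‖f a - f c‖ ≤ L * (a - c) ^ β := hlim
          _ ≤ L * (a - b) ^ β := mul_le_mul_of_nonneg_left
              (Real.rpow_le_rpow (by linarith) (by linarith) hβ0.le) hL.le
    · rw [abs_of_nonpos (by linarith), neg_sub]
      set S : Set ℝ := {x | x ∈ Icc a b ∧ ¬ P x} with hSdef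
      have hbS : b ∈ S := ⟨⟨hab, le_rfl⟩, Pb⟩
      have hSne : S.Nonempty := ⟨b, hbS⟩
      have hSbdd : BddBelow S := ⟨a, fun x hx => hx.1.1⟩
      set c := sInf S with hcdef
      have hcab : a ≤ c := le_csInf hSne (fun x hx => hx.1.1)
      have hcb : c ≤ b := csInf_le hSbdd hbS
      have hcI : c ∈ Icc (0:ℝ) T' := ⟨ha.1.trans hcab, hcb.trans hb.2⟩
      have hfc : f c = f₀ := by
        have hsubZ : S ⊆ {x | x ∈ Icc (0:ℝ) T' ∧ f x = f₀} := by
          intro x hx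
          have hxI : x ∈ Icc (0:ℝ) T' := ⟨ha.1.trans hx.1.1, hx.1.2.trans hb.2⟩
          exact ⟨hxI, hfzero x hxI hx.2⟩
        exact ((closure_minimal hsubZ hZ) (csInf_mem_closure hSne hSbdd)).2
      have hPIco : ∀ τ ∈ Ico a c, P τ := by
        intro τ hτ
        by_contra hPτ
        exact absurd (csInf_le hSbdd ⟨⟨hτ.1, hτ.2.le.trans hcb⟩, hPτ⟩)
          (not_le.mpr hτ.2)
      rcases eq_or_lt_of_le hcab with heq | hac
      · rw [hfb, show f a = f₀ from by rw [heq]; exact hfc, sub_self, norm_zero]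
        exact mul_nonneg hL.le (Real.rpow_nonneg (by linarith) β)
      · have hkey' : ∀ τ ∈ Ico a c, ‖f a - f τ‖ ≤ L * (c - a) ^ β := by
          intro τ hτ
          have hτI : τ ∈ Icc (0:ℝ) T' := ⟨ha.1.trans hτ.1, (hτ.2.le.trans hcb).trans hb.2⟩
          calc ‖f a - f τ‖ = ‖f τ - f a‖ := norm_sub_rev _ _
            _ ≤ L * (τ - a) ^ β := hkey a τ ha hτI hτ.1 Pa (hPIco τ hτ)
            _ ≤ L * (c - a) ^ β := mul_le_mul_of_nonneg_left
                (Real.rpow_le_rpow (by linarith [hτ.1]) (by linarith [hτ.2]) hβ0.le) hL.le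
        have hne : (nhdsWithin c (Ico a c)).NeBot := by
          apply mem_closure_iff_nhdsWithin_neBot.mp
          rw [closure_Ico hac.ne]
          exact ⟨hac.le, le_rfl⟩
        have h1 : Filter.Tendsto f (nhdsWithin c (Ico a c)) (nhds (f c)) :=
          (hf c hcI).mono_left (nhdsWithin_mono c
            (fun x hx => ⟨ha.1.trans hx.1, (hx.2.le.trans hcb).trans hb.2⟩))
        have htend : Filter.Tendsto (fun τ => ‖f a - f τ‖) (nhdsWithin c (Ico a c))
            (nhds ‖f a - f c‖) := (Filter.Tendsto.sub tendsto_const_nhds h1).norm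
        have hlim : ‖f a - f c‖ ≤ L * (c - a) ^ β := by
          apply le_of_tendsto htend
          filter_upwards [self_mem_nhdsWithin] with τ hτ
          exact hkey' τ hτ
        rw [hfb, ← hfc]
        calc ‖f a - f c‖ ≤ L * (c - a) ^ β := hlim
          _ ≤ L * (b - a) ^ β := mul_le_mul_of_nonneg_left
              (Real.rpow_le_rpow (by linarith) (by linarith) hβ0.le) hL.le
  refine ⟨L, hL, ?_⟩
  have main : ∀ s t : ℝ, s ∈ Icc (0:ℝ) T' → t ∈ Icc (0:ℝ) T' → s ≤ t →
      ‖f t - f s‖ ≤ L * (t - s) ^ β := by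
    intro s t hs ht hst
    by_cases Ps : P s <;> by_cases Pt : P t
    · exact hkey s t hs ht hst Ps Pt
    · have h := hmix s hs t ht Ps Pt
      rw [norm_sub_rev]
      rwa [abs_sub_comm, abs_of_nonneg (by linarith)] at h
    · have h := hmix t ht s hs Pt Ps
      rwa [abs_of_nonneg (by linarith)] at h
    · rw [hfzero s hs Ps, hfzero t ht Pt, sub_self, norm_zero]
      exact mul_nonneg hL.le (Real.rpow_nonneg (by linarith) β)
  intro t ht s hs
  rcases le_total s t with h | h
  · rw [abs_of_nonneg (by linarith)]
    exact main s t hs ht h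
  · rw [abs_of_nonpos (by linarith), neg_sub, norm_sub_rev]
    exact main t s ht hs h
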